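/- arXiv:1610.04415 — 10 statements merged into one kernel-verified Lean document; each statement's English description precedes it below -/
import Mathlib

section
/- Let k be a positive integer. If {1, 8k², 8k²+1, d} is a D(-8k²)-quadruple of positive integers, then d = 32k²+1, and in that case 24k²+1 is a perfect square. -/
/-- Minimal positive solution lemma: any positive solution of
`z² = (16k²+2)s² + 1` has `s ≥ 4k`. -/
private lemma d8k_min (k z s : ℤ) (hk : 0 < k)
    (hz : z ^ 2 = (16 * k ^ 2 + 2) * s ^ 2 + 1) (hz0 : 0 < z) (hs0 : 0 < s) :
    4 * k ≤ s := by
  have h1 : 4 * k * s < z := by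
    by_contra h
    push_neg at h
    have h2 : z * z ≤ (4 * k * s) * (4 * k * s) :=
      mul_le_mul h h hz0.le (by positivity)
    nlinarith
  have h2 : 4 * k * s + 1 ≤ z := h1
  have h3 : (4 * k * s + 1) * (4 * k * s + 1) ≤ z * z :=
    mul_le_mul h2 h2 (by positivity) hz0.le
  by_contra hcon
  push_neg at hcon
  nlinarith [mul_pos hs0 (sub_pos.mpr hcon)]

/-- Gap lemma: any positive solution with `s ≠ 4k` has `s ≥ 8k(16k²+1)`. -/
private lemma d8k_gap (k z s : ℤ) (hk : 0 < k)
    (hz : z ^ 2 = (16 * k ^ 2 + 2) * s ^ 2 + 1) (hz0 : 0 < z) (hs0 : 0 < s)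
    (hne : s ≠ 4 * k) : 8 * k * (16 * k ^ 2 + 1) ≤ s := by
  have hmin := d8k_min k z s hk hz hz0 hs0
  have hs4 : 4 * k + 1 ≤ s := by
    rcases lt_or_eq_of_le hmin with h | h
    · exact h
    · exact absurd h.symm hne
  have e1 : ((16 * k ^ 2 + 1) * s) ^ 2 - (4 * k * z) ^ 2 = s ^ 2 - 16 * k ^ 2 := by
    linear_combination (-16 * k ^ 2) * hz
  have hs' : 0 < (16 * k ^ 2 + 1) * s - 4 * k * z := by
    by_contra h
    push_neg at h
    have h1 : (16 * k ^ 2 + 1) * s ≤ 4 * k * z := by linarith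
    have h2 : ((16 * k ^ 2 + 1) * s) * ((16 * k ^ 2 + 1) * s) ≤ (4 * k * z) * (4 * k * z) :=
      mul_le_mul h1 h1 (by positivity) (by positivity)
    nlinarith
  have e2 : ((16 * k ^ 2 + 1) * z) ^ 2 - ((16 * k ^ 2 + 2) * (4 * k) * s) ^ 2
      = (16 * k ^ 2 + 2) * s ^ 2 + (16 * k ^ 2 + 1) ^ 2 := by
    linear_combination (16 * k ^ 2 + 1) ^ 2 * hz
  have hz' : 0 < (16 * k ^ 2 + 1) * z - (16 * k ^ 2 + 2) * (4 * k) * s := by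
    by_contra h
    push_neg at h
    have h1 : (16 * k ^ 2 + 1) * z ≤ (16 * k ^ 2 + 2) * (4 * k) * s := by linarith
    have h2 : ((16 * k ^ 2 + 1) * z) * ((16 * k ^ 2 + 1) * z)
        ≤ ((16 * k ^ 2 + 2) * (4 * k) * s) * ((16 * k ^ 2 + 2) * (4 * k) * s) :=
      mul_le_mul h1 h1 (by positivity) (by positivity)
    nlinarith
  have hsol' : ((16 * k ^ 2 + 1) * z - (16 * k ^ 2 + 2) * (4 * k) * s) ^ 2
      = (16 * k ^ 2 + 2) * ((16 * k ^ 2 + 1) * s - 4 * k * z) ^ 2 + 1 := by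
    linear_combination hz
  have hmin' := d8k_min k _ _ hk hsol' hz' hs'
  have hzbig : 16 * k ^ 2 + 1 ≤ (16 * k ^ 2 + 1) * z - (16 * k ^ 2 + 2) * (4 * k) * s := by
    by_contra h
    push_neg at h
    have h1 : (16 * k ^ 2 + 1) * z - (16 * k ^ 2 + 2) * (4 * k) * s ≤ 16 * k ^ 2 := by linarith
    nlinarith [mul_le_mul h1 h1 (by linarith) (by positivity : (0:ℤ) ≤ 16 * k ^ 2),
      mul_le_mul hmin' hmin' (by positivity) (le_trans (by positivity) hmin')]
  nlinarith [mul_le_mul_of_nonneg_left hmin' (by positivity : (0:ℤ) ≤ 16 * k ^ 2 + 1)]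

set_option maxHeartbeats 1600000 in
private lemma d8k_classify (k : ℤ) (hk : 0 < k) :
    ∀ n : ℕ, ∀ z s : ℤ, z ^ 2 = (16 * k ^ 2 + 2) * s ^ 2 + 1 → 0 < z → 0 ≤ s → s ≤ (n : ℤ) →
      (∃ Z S : ℤ, 0 < Z ∧ 0 ≤ S ∧ Z ^ 2 = (16 * k ^ 2 + 2) * S ^ 2 + 1 ∧
          z = 2 * Z ^ 2 - 1 ∧ s = 2 * Z * S ∧ k ∣ S) ∨
      (∃ p v : ℤ, 0 < p ∧ 0 < v ∧ (8 * k ^ 2 + 1) * p ^ 2 - 2 * v ^ 2 = 1 ∧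
          z = 2 * (8 * k ^ 2 + 1) * p ^ 2 - 1 ∧ s = 2 * p * v ∧ k ∣ (p - 1)) := by
  intro n
  induction n using Nat.strong_induction_on with
  | _ n ih =>
  intro z s hz hz0 hs0 hsn
  rcases eq_or_lt_of_le hs0 with h0 | hspos
  · -- s = 0
    left
    have hs : s = 0 := h0.symm
    have hz1 : (z - 1) * (z + 1) = 0 := by rw [hs] at hz; linear_combination hz
    have hz1' : z = 1 := by
      rcases mul_eq_zero.mp hz1 with h | h
      · linarith
      · exfalso; linarith
    refine ⟨1, 0, one_pos, le_refl 0, by ring, by rw [hz1']; ring, by rw [hs]; ring, ⟨0, by ring⟩⟩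
  · by_cases h4 : s = 4 * k
    · right
      refine ⟨1, 2 * k, one_pos, by positivity, by ring, ?_, by rw [h4]; ring, ⟨0, by ring⟩⟩
      have hzq : (z - (16 * k ^ 2 + 1)) * (z + (16 * k ^ 2 + 1)) = 0 := by
        rw [h4] at hz; linear_combination hz
      rcases mul_eq_zero.mp hzq with h | h
      · have : z = 16 * k ^ 2 + 1 := by linarith
        rw [this]; ring
      · exfalso; nlinarith
    · have hgap := d8k_gap k z s hk hz hz0 hspos h4
      set A : ℤ := 2 * (16 * k ^ 2 + 1) ^ 2 - 1 with hA
      set B : ℤ := 8 * k * (16 * k ^ 2 + 1) with hB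
      have hApos : 0 < A := by rw [hA]; nlinarith
      have hBpos : 0 < B := by rw [hB]; positivity
      -- two-step descent
      have hsol'' : (A * z - (16 * k ^ 2 + 2) * B * s) ^ 2
          = (16 * k ^ 2 + 2) * (A * s - B * z) ^ 2 + 1 := by
        rw [hA, hB]; linear_combination hz
      have e1 : (A * s) ^ 2 - (B * z) ^ 2 = s ^ 2 - B ^ 2 := by
        rw [hA, hB]; linear_combination (-(8 * k * (16 * k ^ 2 + 1)) ^ 2) * hz
      have hs''0 : 0 ≤ A * s - B * z := by
        by_contra h
        push_neg at h
        have h1 : A * s < B * z := by linarith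
        have h5 : 0 < (B * z - A * s) * (B * z + A * s) :=
          mul_pos (by linarith) (by nlinarith [mul_pos hApos hspos, mul_pos hBpos hz0])
        have h3 : B ≤ s := hgap
        have h4 : B * B ≤ s * s := mul_le_mul h3 h3 hBpos.le hs0
        nlinarith [e1, h5, h4]
      have e2 : (A * z) ^ 2 - ((16 * k ^ 2 + 2) * B * s) ^ 2
          = (16 * k ^ 2 + 2) * s ^ 2 + A ^ 2 := by
        rw [hA, hB]; linear_combination (2 * (16 * k ^ 2 + 1) ^ 2 - 1) ^ 2 * hz
      have hz''0 : 0 < A * z - (16 * k ^ 2 + 2) * B * s := by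
        by_contra h
        push_neg at h
        have h1 : A * z ≤ (16 * k ^ 2 + 2) * B * s := by linarith
        have h2 : (A * z) * (A * z) ≤ ((16 * k ^ 2 + 2) * B * s) * ((16 * k ^ 2 + 2) * B * s) :=
          mul_le_mul h1 h1 (by positivity) (by positivity)
        nlinarith
      have hrec_z : z = A * (A * z - (16 * k ^ 2 + 2) * B * s)
          + (16 * k ^ 2 + 2) * B * (A * s - B * z) := by rw [hA, hB]; ring
      have hrec_s : s = A * (A * s - B * z) + B * (A * z - (16 * k ^ 2 + 2) * B * s) := by
        rw [hA, hB]; ring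
      have hlt : A * s - B * z < s := by nlinarith
      have hn1 : 1 ≤ n := by
        have : (1 : ℤ) ≤ (n : ℤ) := le_trans (by nlinarith) hsn
        exact_mod_cast this
      have hcast : ((n - 1 : ℕ) : ℤ) = (n : ℤ) - 1 := by
        have := Nat.cast_sub (R := ℤ) hn1
        simpa using this
      have hs''n : A * s - B * z ≤ ((n - 1 : ℕ) : ℤ) := by
        rw [hcast]; linarith
      have IH := ih (n - 1) (by omega) _ _ hsol'' hz''0 hs''0 hs''n
      rcases IH with ⟨Z, S, hZ0, hS0, hZS, hzZ, hsZ, hkS⟩ | ⟨p, v, hp0, hv0, hpv, hzp, hsp, hkp⟩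
      · left
        refine ⟨(16 * k ^ 2 + 1) * Z + (16 * k ^ 2 + 2) * (4 * k) * S,
            4 * k * Z + (16 * k ^ 2 + 1) * S, ?_, ?_, ?_, ?_, ?_, ?_⟩
        · have : 0 < (16 * k ^ 2 + 1) * Z := by positivity
          nlinarith [mul_nonneg (by positivity : (0:ℤ) ≤ (16 * k ^ 2 + 2) * (4 * k)) hS0]
        · have h1 : 0 ≤ 4 * k * Z := by positivity
          nlinarith [mul_nonneg (by positivity : (0:ℤ) ≤ 16 * k ^ 2 + 1) hS0]
        · linear_combination hZS
        · rw [hrec_z, hzZ, hsZ, hA, hB]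
          linear_combination (2 * (16 * k ^ 2 + 2) * 16 * k ^ 2) * hZS
        · rw [hrec_s, hsZ, hzZ, hA, hB]
          linear_combination (2 * (16 * k ^ 2 + 1) * (4 * k)) * hZS
        · obtain ⟨c, hc⟩ := hkS
          exact ⟨4 * Z + (16 * k ^ 2 + 1) * c, by rw [hc]; ring⟩
      · right
        refine ⟨(16 * k ^ 2 + 1) * p + 8 * k * v,
            (16 * k ^ 2 + 1) * v + 4 * k * (8 * k ^ 2 + 1) * p, ?_, ?_, ?_, ?_, ?_, ?_⟩
        · nlinarith [mul_pos (by positivity : (0:ℤ) < 16 * k ^ 2 + 1) hp0,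
            mul_pos (by positivity : (0:ℤ) < 8 * k) hv0]
        · nlinarith [mul_pos (by positivity : (0:ℤ) < 16 * k ^ 2 + 1) hv0,
            mul_pos (by positivity : (0:ℤ) < 4 * k * (8 * k ^ 2 + 1)) hp0]
        · linear_combination hpv
        · rw [hrec_z, hzp, hsp, hA, hB]
          linear_combination (64 * k ^ 2 * (8 * k ^ 2 + 1)) * hpv
        · rw [hrec_s, hsp, hzp, hA, hB]
          linear_combination (8 * k * (16 * k ^ 2 + 1)) * hpv
        · obtain ⟨c, hc⟩ := hkp
          refine ⟨16 * k * p + 8 * v + c, ?_⟩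
          have : p = k * c + 1 := by linarith
          rw [this]; ring


set_option maxHeartbeats 1600000 in
private lemma d8k_sol (k z s x : ℤ) (hk : 0 < k)
    (hz : z ^ 2 = (16 * k ^ 2 + 2) * s ^ 2 + 1) (hz0 : 0 < z) (hs0 : 0 < s)
    (hx : x ^ 2 = 2 * s ^ 2 + 1 - 8 * k ^ 2) : s = 4 * k := by
  have hsn : s ≤ (s.toNat : ℤ) := by rw [Int.toNat_of_nonneg hs0.le]
  rcases d8k_classify k hk s.toNat z s hz hz0 hs0.le hsn with
    ⟨Z, S, hZ0, hS0, hZS, hzZ, hsZ, hkS⟩ | ⟨p, v, hp0, hv0, hpv, hzp, hsp, hkp⟩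
  · -- even case: impossible
    exfalso
    have hSpos : 0 < S := by
      rcases hS0.eq_or_lt with h | h
      · exfalso; rw [hsZ, ← h] at hs0; simp at hs0
      · exact h
    have hfact : (4 * S ^ 2 + 1) * (4 * (8 * k ^ 2 + 1) * S ^ 2 - (8 * k ^ 2 - 1)) = x ^ 2 := by
      rw [hsZ] at hx
      linear_combination -hx - 8 * S ^ 2 * hZS
    have hcop : IsCoprime (4 * S ^ 2 + 1) (4 * (8 * k ^ 2 + 1) * S ^ 2 - (8 * k ^ 2 - 1)) := by
      rw [Int.isCoprime_iff_gcd_eq_one]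
      by_contra hg
      obtain ⟨q, hqprime, hqdvd⟩ := Nat.exists_prime_and_dvd hg
      have hqZ : Prime (q : ℤ) := Nat.prime_iff_prime_int.mp hqprime
      have hgd : ((Int.gcd (4 * S ^ 2 + 1) (4 * (8 * k ^ 2 + 1) * S ^ 2 - (8 * k ^ 2 - 1)) : ℤ)) ∣ (4 * S ^ 2 + 1) := Int.gcd_dvd_left _ _
      have hgd2 : ((Int.gcd (4 * S ^ 2 + 1) (4 * (8 * k ^ 2 + 1) * S ^ 2 - (8 * k ^ 2 - 1)) : ℤ)) ∣ (4 * (8 * k ^ 2 + 1) * S ^ 2 - (8 * k ^ 2 - 1)) := Int.gcd_dvd_right _ _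
      have hq1 : (q : ℤ) ∣ 4 * S ^ 2 + 1 := dvd_trans (Int.natCast_dvd_natCast.mpr hqdvd) hgd
      have hq2 : (q : ℤ) ∣ 4 * (8 * k ^ 2 + 1) * S ^ 2 - (8 * k ^ 2 - 1) :=
        dvd_trans (Int.natCast_dvd_natCast.mpr hqdvd) hgd2
      have hq16 : (q : ℤ) ∣ 16 * k ^ 2 := by
        have key : (8 * k ^ 2 + 1) * (4 * S ^ 2 + 1)
            - (4 * (8 * k ^ 2 + 1) * S ^ 2 - (8 * k ^ 2 - 1)) = 16 * k ^ 2 := by ring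
        rw [← key]
        exact dvd_sub (Dvd.dvd.mul_left hq1 _) hq2
      have hqne2 : q ≠ 2 := by
        rintro rfl
        obtain ⟨c, hc⟩ := hq1
        have hc' : 4 * S ^ 2 + 1 = 2 * c := by exact_mod_cast hc
        have : (2 : ℤ) ∣ 1 := ⟨c - 2 * S ^ 2, by linarith⟩
        norm_num at this
      have hqk : (q : ℤ) ∣ k := by
        rcases hqZ.dvd_mul.mp hq16 with h | h
        · exfalso
          have h2 : (q : ℤ) ∣ 2 := by
            have : (16 : ℤ) = 2 ^ 4 := by norm_num
            exact hqZ.dvd_of_dvd_pow (this ▸ h)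
          have : q ∣ 2 := by exact_mod_cast h2
          have := (Nat.prime_dvd_prime_iff_eq hqprime Nat.prime_two).mp this
          exact hqne2 this
        · exact hqZ.dvd_of_dvd_pow h
      have hqS : (q : ℤ) ∣ S := hqk.trans hkS
      have : (q : ℤ) ∣ 1 := by
        have h4' : (q : ℤ) ∣ 4 * S ^ 2 := by
          obtain ⟨c, hc⟩ := hqS
          exact ⟨4 * c * S, by rw [hc]; ring⟩
        have := dvd_sub hq1 h4'
        simpa using this
      exact hqZ.not_dvd_one this
    obtain ⟨r, hr⟩ := Int.sq_of_isCoprime hcop hfact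
    rcases hr with hr | hr
    · have h1 : 2 * S < |r| := by nlinarith [sq_abs r, abs_nonneg r]
      have h2 : 2 * S + 1 ≤ |r| := h1
      nlinarith [sq_abs r, mul_le_mul h2 h2 (by positivity) (abs_nonneg r)]
    · nlinarith [sq_nonneg r]
  · -- odd case: p = 1 or contradiction
    by_cases hp1 : p = 1
    · rw [hp1] at hpv hsp
      have hv2 : v ^ 2 = 4 * k ^ 2 := by nlinarith
      have hveq : v = 2 * k := by
        have hq : (v - 2 * k) * (v + 2 * k) = 0 := by linear_combination hv2
        rcases mul_eq_zero.mp hq with h | h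
        · linarith
        · exfalso; nlinarith
      rw [hsp, hveq]; ring
    · exfalso
      have hp2 : 2 ≤ p := by omega
      have hfact : (2 * p ^ 2 - 1) * (4 * v ^ 2 + 8 * k ^ 2 + 1) = x ^ 2 := by
        rw [hsp] at hx
        linear_combination -hx + 2 * hpv
      have hcop : IsCoprime (2 * p ^ 2 - 1) (4 * v ^ 2 + 8 * k ^ 2 + 1) := by
        rw [Int.isCoprime_iff_gcd_eq_one]
        by_contra hg
        obtain ⟨q, hqprime, hqdvd⟩ := Nat.exists_prime_and_dvd hg
        have hqZ : Prime (q : ℤ) := Nat.prime_iff_prime_int.mp hqprime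
        have hq1 : (q : ℤ) ∣ 2 * p ^ 2 - 1 :=
          dvd_trans (Int.natCast_dvd_natCast.mpr hqdvd) (Int.gcd_dvd_left _ _)
        have hq2 : (q : ℤ) ∣ 4 * v ^ 2 + 8 * k ^ 2 + 1 :=
          dvd_trans (Int.natCast_dvd_natCast.mpr hqdvd) (Int.gcd_dvd_right _ _)
        have hq16 : (q : ℤ) ∣ 16 * k ^ 2 := by
          have key : (4 * v ^ 2 + 8 * k ^ 2 + 1) - (8 * k ^ 2 + 1) * (2 * p ^ 2 - 1)
              = 16 * k ^ 2 - 2 * ((8 * k ^ 2 + 1) * p ^ 2 - 2 * v ^ 2 - 1) := by ring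
          have : (q : ℤ) ∣ (4 * v ^ 2 + 8 * k ^ 2 + 1) - (8 * k ^ 2 + 1) * (2 * p ^ 2 - 1) :=
            dvd_sub hq2 (Dvd.dvd.mul_left hq1 _)
          rw [key] at this
          have hz' : (8 * k ^ 2 + 1) * p ^ 2 - 2 * v ^ 2 - 1 = 0 := by linarith
          rw [hz'] at this
          simpa using this
        have hqne2 : q ≠ 2 := by
          rintro rfl
          obtain ⟨c, hc⟩ := hq1
          have hc' : 2 * p ^ 2 - 1 = 2 * c := by exact_mod_cast hc
          have : (2 : ℤ) ∣ 1 := ⟨p ^ 2 - c, by linarith⟩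
          norm_num at this
        have hqk : (q : ℤ) ∣ k := by
          rcases hqZ.dvd_mul.mp hq16 with h | h
          · exfalso
            have h2 : (q : ℤ) ∣ 2 := by
              have : (16 : ℤ) = 2 ^ 4 := by norm_num
              exact hqZ.dvd_of_dvd_pow (this ▸ h)
            have : q ∣ 2 := by exact_mod_cast h2
            exact hqne2 ((Nat.prime_dvd_prime_iff_eq hqprime Nat.prime_two).mp this)
          · exact hqZ.dvd_of_dvd_pow h
        have hqp1 : (q : ℤ) ∣ p - 1 := hqk.trans hkp
        have : (q : ℤ) ∣ 1 := by
          obtain ⟨c, hc⟩ := hqp1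
          have h2 : (q : ℤ) ∣ 2 * (p - 1) * (p + 1) := ⟨2 * c * (p + 1), by rw [hc]; ring⟩
          have key : (2 * p ^ 2 - 1) - 2 * (p - 1) * (p + 1) = 1 := by ring
          have := dvd_sub hq1 h2
          rwa [key] at this
        exact hqZ.not_dvd_one this
      obtain ⟨b, hb⟩ := Int.sq_of_isCoprime hcop.symm (by linear_combination hfact :
        (4 * v ^ 2 + 8 * k ^ 2 + 1) * (2 * p ^ 2 - 1) = x ^ 2)
      have hb2 : 4 * v ^ 2 + 8 * k ^ 2 + 1 = b ^ 2 := by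
        rcases hb with h | h
        · exact h
        · exfalso; nlinarith [sq_nonneg b]
      have hvb : v ≤ 2 * k ^ 2 := by
        have h1 : 2 * v < |b| := by nlinarith [sq_abs b, abs_nonneg b]
        have h2 : 2 * v + 1 ≤ |b| := h1
        nlinarith [sq_abs b, mul_le_mul h2 h2 (by positivity) (abs_nonneg b)]
      have hs4 : s ≠ 4 * k := by
        intro hcon
        rw [hsp] at hcon
        have hpv2 : p * v = 2 * k := by linarith
        have e : (8 * k ^ 2 + 1) * p ^ 4 - 8 * k ^ 2 = p ^ 2 := by
          linear_combination p ^ 2 * hpv + (2 * p * v + 4 * k) * hpv2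
        nlinarith [mul_le_mul hp2 hp2 (by norm_num) (by linarith : (0:ℤ) ≤ p), sq_nonneg p,
          sq_nonneg (p ^ 2 - 1), hk]
      have hgap := d8k_gap k z s hk hz hz0 hs0 hs4
      have hpvbig : 4 * k * (16 * k ^ 2 + 1) ≤ p * v := by
        rw [hsp] at hgap; linarith
      have hv2kp : 2 * k * p ≤ v := by
        have hsq : 4 * k ^ 2 * p ^ 2 ≤ v ^ 2 := by nlinarith [sq_nonneg p]
        by_contra h
        push_neg at h
        nlinarith [mul_le_mul h.le h.le hv0.le (by positivity : (0:ℤ) ≤ 2 * k * p)]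
      nlinarith [mul_le_mul_of_nonneg_left hpvbig (by positivity : (0:ℤ) ≤ 2 * k),
        mul_le_mul_of_nonneg_right hv2kp hv0.le,
        mul_le_mul_of_nonneg_left hvb (by linarith : (0:ℤ) ≤ v)]

set_option maxHeartbeats 1600000 in
/-- If `{1, 8k², 8k²+1, d}` is a `D(-8k²)`-quadruple of positive integers,
then `d = 32k²+1`, and in that case `24k²+1` is a perfect square. -/
theorem stmt_1 (k d : ℤ) (hk : 0 < k) (hd : 0 < d)
    (hd1 : d ≠ 1) (hd2 : d ≠ 8 * k ^ 2) (hd3 : d ≠ 8 * k ^ 2 + 1)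
    (h12 : ∃ x : ℤ, 1 * (8 * k ^ 2) - 8 * k ^ 2 = x ^ 2)
    (h13 : ∃ x : ℤ, 1 * (8 * k ^ 2 + 1) - 8 * k ^ 2 = x ^ 2)
    (h23 : ∃ x : ℤ, 8 * k ^ 2 * (8 * k ^ 2 + 1) - 8 * k ^ 2 = x ^ 2)
    (h1d : ∃ x : ℤ, 1 * d - 8 * k ^ 2 = x ^ 2)
    (h2d : ∃ x : ℤ, 8 * k ^ 2 * d - 8 * k ^ 2 = x ^ 2)
    (h3d : ∃ x : ℤ, (8 * k ^ 2 + 1) * d - 8 * k ^ 2 = x ^ 2) :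
    d = 32 * k ^ 2 + 1 ∧ ∃ x : ℤ, 24 * k ^ 2 + 1 = x ^ 2 := by
  obtain ⟨y, hy⟩ := h2d
  obtain ⟨x1, hx1⟩ := h1d
  obtain ⟨z0, hz0⟩ := h3d
  -- from h2d : 8k²(d-1) = y², deduce d = 2s²+1
  have hy2 : y ^ 2 = (2 * k) ^ 2 * (2 * (d - 1)) := by linear_combination -hy
  have hdvd : (2 * k) ∣ y := by
    have hdd : (2 * k) ^ 2 ∣ y ^ 2 := ⟨2 * (d - 1), hy2⟩
    exact (Int.pow_dvd_pow_iff two_ne_zero).mp hdd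
  obtain ⟨w, hw⟩ := hdvd
  have hw2 : 2 * (d - 1) = w ^ 2 := by
    have h4k : (2 * k) ^ 2 ≠ 0 := by positivity
    have : (2 * k) ^ 2 * (2 * (d - 1)) = (2 * k) ^ 2 * w ^ 2 := by
      rw [← hy2, hw]; ring
    exact mul_left_cancel₀ h4k this
  have hweven : (2 : ℤ) ∣ w := by
    have hev : Even (w ^ 2) := ⟨d - 1, by linarith⟩
    have : Even w := (Int.even_pow.mp hev).1
    obtain ⟨m, hm⟩ := this
    exact ⟨m, by linarith⟩
  obtain ⟨t, ht⟩ := hweven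
  have hd2s : d = 2 * t ^ 2 + 1 := by
    have : 2 * (d - 1) = (2 * t) ^ 2 := by rw [← ht]; exact hw2
    nlinarith [this]
  have hds : d = 2 * |t| ^ 2 + 1 := by rw [sq_abs]; exact hd2s
  have hspos : 0 < |t| := by
    rcases abs_nonneg t |>.eq_or_lt with h | h
    · exfalso; apply hd1; rw [hds, ← h]; ring
    · exact h
  -- z equation
  have hzz : z0 ^ 2 = (16 * k ^ 2 + 2) * |t| ^ 2 + 1 := by
    rw [hds] at hz0; linear_combination -hz0
  have hZsq : |z0| ^ 2 = (16 * k ^ 2 + 2) * |t| ^ 2 + 1 := by rw [sq_abs]; exact hzz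
  have hZpos : 0 < |z0| := by
    rcases abs_nonneg z0 |>.eq_or_lt with h | h
    · exfalso
      have hz00 : z0 = 0 := abs_eq_zero.mp h.symm
      rw [hz00] at hzz
      nlinarith [sq_nonneg (|t|), hspos]
    · exact h
  -- x equation
  have hxx : x1 ^ 2 = 2 * |t| ^ 2 + 1 - 8 * k ^ 2 := by
    rw [hds] at hx1; linear_combination -hx1
  have hs4k : |t| = 4 * k := d8k_sol k |z0| |t| x1 hk hZsq hZpos hspos hxx
  constructor
  · rw [hds, hs4k]; ring
  · refine ⟨x1, ?_⟩
    rw [hs4k] at hxx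
    linear_combination -hxx
end

section
/- Let k be a positive integer. If {1, 8k², 8k²+1, d} is a D(-8k²)-quadruple of positive integers, then there exist nonnegative integers x, y, z such that d = 2y² + 1, x² − 2y² = 1 − 8k², and z² − (16k²+2)y² = 1. -/
/-- If `{1, 8k², 8k²+1, d}` is a `D(-8k²)`-quadruple of positive integers, then there exist
nonnegative integers `x, y, z` with `d = 2y²+1`, `x² - 2y² = 1 - 8k²` and
`z² - (16k²+2)y² = 1`. -/
theorem stmt_2 (k d : ℤ) (hk : 0 < k) (hd : 0 < d)
    (hd1 : d ≠ 1) (hd2 : d ≠ 8 * k ^ 2) (hd3 : d ≠ 8 * k ^ 2 + 1)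
    (h12 : ∃ x : ℤ, 1 * (8 * k ^ 2) - 8 * k ^ 2 = x ^ 2)
    (h13 : ∃ x : ℤ, 1 * (8 * k ^ 2 + 1) - 8 * k ^ 2 = x ^ 2)
    (h23 : ∃ x : ℤ, 8 * k ^ 2 * (8 * k ^ 2 + 1) - 8 * k ^ 2 = x ^ 2)
    (h1d : ∃ x : ℤ, 1 * d - 8 * k ^ 2 = x ^ 2)
    (h2d : ∃ x : ℤ, 8 * k ^ 2 * d - 8 * k ^ 2 = x ^ 2)
    (h3d : ∃ x : ℤ, (8 * k ^ 2 + 1) * d - 8 * k ^ 2 = x ^ 2) :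
    ∃ x y z : ℤ, 0 ≤ x ∧ 0 ≤ y ∧ 0 ≤ z ∧ d = 2 * y ^ 2 + 1 ∧
      x ^ 2 - 2 * y ^ 2 = 1 - 8 * k ^ 2 ∧ z ^ 2 - (16 * k ^ 2 + 2) * y ^ 2 = 1 := by
  obtain ⟨x1, hx1⟩ := h1d
  obtain ⟨x2, hx2⟩ := h2d
  obtain ⟨x3, hx3⟩ := h3d
  have hdvd : (2 * k) ^ 2 ∣ x2 ^ 2 := ⟨2 * (d - 1), by linarith [hx2.symm, sq_nonneg x2]⟩
  have h2k : (2 * k) ∣ x2 := (Int.pow_dvd_pow_iff (by norm_num)).mp hdvd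
  obtain ⟨u, hu⟩ := h2k
  have hk2 : (4 * k ^ 2 : ℤ) ≠ 0 := by positivity
  rw [hu] at hx2
  have hu2 : u ^ 2 = 2 * (d - 1) := by
    have h4 : 4 * k ^ 2 * u ^ 2 = 4 * k ^ 2 * (2 * (d - 1)) := by linear_combination -hx2
    exact mul_left_cancel₀ hk2 h4
  have heu : Even u := by
    have : Even (u ^ 2) := ⟨d - 1, by linarith⟩
    exact (Int.even_pow.mp this).1
  obtain ⟨y, hy⟩ := heu
  have hdy : d = 2 * y ^ 2 + 1 := by
    subst hy
    have h4 : (y + y) ^ 2 = 4 * y ^ 2 := by ring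
    rw [h4] at hu2; linarith
  refine ⟨|x1|, |y|, |x3|, abs_nonneg _, abs_nonneg _, abs_nonneg _, ?_, ?_, ?_⟩
  · rw [sq_abs]; exact hdy
  · rw [sq_abs, sq_abs]; linarith [hx1, hdy]
  · rw [sq_abs, sq_abs]; nlinarith [hx3, hdy]
end

section
/- Let k be a positive integer and let (z_n), (y_n) be defined by z_0 = 1, y_0 = 0, z_{n+1} = (16k²+1)z_n + 4k(16k²+2)y_n, y_{n+1} = (16k²+1)y_n + 4k·z_n. Then for every n ∈ ℕ, the integers 4y_n² + 1 and 32k²y_n² + 4y_n² − 8k² + 1 are relatively prime. -/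
/-- The pair `(z n, y n)` of sequences with `z 0 = 1`, `y 0 = 0`,
`z (n+1) = (16k^2+1) * z n + 4k(16k^2+2) * y n` and `y (n+1) = (16k^2+1) * y n + 4k * z n`. -/
def zy (k : ℤ) : ℕ → ℤ × ℤ
  | 0 => (1, 0)
  | n + 1 =>
    ((16 * k ^ 2 + 1) * (zy k n).1 + 4 * k * (16 * k ^ 2 + 2) * (zy k n).2,
     (16 * k ^ 2 + 1) * (zy k n).2 + 4 * k * (zy k n).1)

/-- For every `n`, the integers `4 * (y n)^2 + 1` and
`32k^2 * (y n)^2 + 4 * (y n)^2 - 8k^2 + 1` are relatively prime. -/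
theorem stmt_7 (k : ℤ) (hk : 0 < k) (n : ℕ) :
    IsCoprime (4 * (zy k n).2 ^ 2 + 1)
      (32 * k ^ 2 * (zy k n).2 ^ 2 + 4 * (zy k n).2 ^ 2 - 8 * k ^ 2 + 1) := by
  have hdvd : ∀ m : ℕ, 4 * k ∣ (zy k m).2 := by
    intro m
    induction m with
    | zero => exact dvd_zero _
    | succ i ih =>
      show 4 * k ∣ (16 * k ^ 2 + 1) * (zy k i).2 + 4 * k * (zy k i).1
      exact dvd_add (Dvd.dvd.mul_left ih _) (Dvd.dvd.mul_right dvd_rfl _)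
  obtain ⟨m, hm⟩ := hdvd n
  refine ⟨1 - 4 * m ^ 2 * (8 * k ^ 2 + 1), 4 * m ^ 2, ?_⟩
  rw [hm]; ring
end

section
/- Let k be a positive integer and let (z_n), (y_n) be defined by z_0 = 1, y_0 = 0, z_{n+1} = (16k²+1)z_n + 4k(16k²+2)y_n, y_{n+1} = (16k²+1)y_n + 4k·z_n. Then for every n ≥ 1, the integer 2·y_{2n}² − 8k² + 1 is not a perfect square. -/
/-- The Pell invariant. -/
lemma zy_pell (k : ℤ) (n : ℕ) :
    (zy k n).1 ^ 2 - (16 * k ^ 2 + 2) * (zy k n).2 ^ 2 = 1 := by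
  induction n with
  | zero => simp [zy]
  | succ n ih => simp only [zy]; linear_combination ih

/-- Doubling formulas. -/
lemma zy_double (k : ℤ) (n : ℕ) :
    zy k (2 * n) = ((zy k n).1 ^ 2 + (16 * k ^ 2 + 2) * (zy k n).2 ^ 2,
      2 * (zy k n).1 * (zy k n).2) := by
  induction n with
  | zero => simp [zy]
  | succ n ih =>
    have h : 2 * (n + 1) = (2 * n) + 1 + 1 := by ring
    rw [h]
    simp only [zy, ih]
    refine Prod.ext ?_ ?_ <;> simp only <;> ring

lemma k_dvd_y (k : ℤ) (n : ℕ) : k ∣ (zy k n).2 := by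
  induction n with
  | zero => simp [zy]
  | succ n ih =>
    simp only [zy]
    exact dvd_add (Dvd.dvd.mul_left ih _) ⟨4 * (zy k n).1, by ring⟩

lemma zy_pos (k : ℤ) (hk : 0 < k) (n : ℕ) :
    0 < (zy k n).1 ∧ 0 ≤ (zy k n).2 ∧ (1 ≤ n → 0 < (zy k n).2) := by
  induction n with
  | zero => simp [zy]
  | succ n ih =>
    obtain ⟨h1, h2, _⟩ := ih
    have hk1 : (0:ℤ) < 16 * k ^ 2 + 1 := by positivity
    have hk2 : (0:ℤ) < 4 * k * (16 * k ^ 2 + 2) := by positivity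
    have hA : 0 < (16 * k ^ 2 + 1) * (zy k n).1 := mul_pos hk1 h1
    have hB : 0 ≤ 4 * k * (16 * k ^ 2 + 2) * (zy k n).2 := mul_nonneg hk2.le h2
    have hC : 0 ≤ (16 * k ^ 2 + 1) * (zy k n).2 := mul_nonneg hk1.le h2
    have hD : 0 < 4 * k * (zy k n).1 := mul_pos (by positivity) h1
    refine ⟨?_, ?_, fun _ => ?_⟩ <;> simp only [zy] <;> linarith

/-- For every `n ≥ 1`, the integer `2 * (y (2n))^2 - 8k^2 + 1` is not a perfect square. -/
theorem stmt_8 (k : ℤ) (hk : 0 < k) (n : ℕ) (hn : 1 ≤ n) :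
    ¬ ∃ x : ℤ, 2 * (zy k (2 * n)).2 ^ 2 - 8 * k ^ 2 + 1 = x ^ 2 := by
  rintro ⟨x, hx⟩
  set z := (zy k n).1 with hz
  set y := (zy k n).2 with hy
  have hpell : z ^ 2 - (16 * k ^ 2 + 2) * y ^ 2 = 1 := zy_pell k n
  have hdbl : (zy k (2 * n)).2 = 2 * z * y := by rw [zy_double]
  rw [hdbl] at hx
  -- the factorization
  have hfac : (2 * z ^ 2 - 8 * k ^ 2 - 1) * (4 * y ^ 2 + 1) = x ^ 2 := by
    rw [← hx]; linear_combination 2 * hpell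
  -- positivity
  obtain ⟨hzpos, hynonneg, hypos'⟩ := zy_pos k hk n
  have hypos : 0 < y := hypos' hn
  -- coprimality
  have hcop : IsCoprime (4 * y ^ 2 + 1) (2 * z ^ 2 - 8 * k ^ 2 - 1) := by
    obtain ⟨c, hc⟩ := k_dvd_y k n
    have hc' : y = k * c := by rw [hy, hc]
    have h2 : IsCoprime (4 * y ^ 2 + 1) (2 : ℤ) := ⟨1, -2 * y ^ 2, by ring⟩
    have hkk : IsCoprime (4 * y ^ 2 + 1) k := ⟨1, -(4 * c ^ 2 * k), by rw [hc']; ring⟩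
    have hck : IsCoprime (4 * y ^ 2 + 1) (-(64 * k ^ 2)) := by
      have h64 : (-(64 * k ^ 2) : ℤ) = -(2 ^ 6 * k ^ 2) := by ring
      rw [h64]
      exact ((h2.pow_right).mul_right (hkk.pow_right)).neg_right
    have h4 : IsCoprime (4 * y ^ 2 + 1)
        (-(64 * k ^ 2) + (4 * y ^ 2 + 1) * (2 * (16 * k ^ 2 + 2))) :=
      hck.add_mul_left_right _
    have key : -(64 * k ^ 2) + (4 * y ^ 2 + 1) * (2 * (16 * k ^ 2 + 2)) =
        4 * (2 * z ^ 2 - 8 * k ^ 2 - 1) := by linear_combination -8 * hpell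
    rw [key] at h4
    exact h4.of_mul_right_right
  obtain ⟨b, hb⟩ := Int.sq_of_isCoprime hcop (by rw [mul_comm]; exact hfac)
  have hbsq : 4 * y ^ 2 + 1 = b ^ 2 := by
    rcases hb with h | h
    · exact h
    · nlinarith [sq_nonneg b, sq_nonneg y]
  -- 4y^2+1 = b^2 forces y = 0, contradiction
  have hmul : (b - 2 * y) * (b + 2 * y) = 1 := by linear_combination -hbsq
  rcases Int.mul_eq_one_iff_eq_one_or_neg_one.mp hmul with ⟨h1, h2⟩ | ⟨h1, h2⟩ <;> omega
end

section
/- Let k be a positive integer and let (z_n), (y_n) be defined by z_0 = 1, y_0 = 0, z_{n+1} = (16k²+1)z_n + 4k(16k²+2)y_n, y_{n+1} = (16k²+1)y_n + 4k·z_n. Then for every n ∈ ℕ, 8k²+1 divides z_{2n} − 1 and 8k²+1 divides z_{2n+1} − 8k². -/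
lemma zy_key (k : ℤ) : ∀ n : ℕ, (8 * k ^ 2 + 1) ∣ ((zy k n).1 - (-1) ^ n)
  | 0 => by simp [zy]
  | n + 1 => by
    have ih := zy_key k n
    have : (zy k (n+1)).1 - (-1) ^ (n+1)
        = (16 * k ^ 2 + 1) * ((zy k n).1 - (-1) ^ n)
          + (8 * k ^ 2 + 1) * ((-1) ^ n * 2 + 8 * k * (zy k n).2) := by
      simp [zy]; ring
    rw [this]
    exact dvd_add (Dvd.dvd.mul_left ih _) (Dvd.intro _ rfl)

/-- For every `n`, `8k^2+1` divides `z (2n) - 1` and `8k^2+1` divides `z (2n+1) - 8k^2`. -/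
theorem stmt_9 (k : ℤ) (hk : 0 < k) (n : ℕ) :
    (8 * k ^ 2 + 1) ∣ ((zy k (2 * n)).1 - 1) ∧
      (8 * k ^ 2 + 1) ∣ ((zy k (2 * n + 1)).1 - 8 * k ^ 2) := by
  constructor
  · have := zy_key k (2 * n)
    simpa [pow_mul] using this
  · have h := zy_key k (2 * n + 1)
    have h2 : (8 * k ^ 2 + 1 : ℤ) ∣ (8 * k ^ 2 + 1) := dvd_rfl
    have : (zy k (2*n+1)).1 - 8 * k ^ 2
        = ((zy k (2*n+1)).1 - (-1) ^ (2*n+1)) - (8 * k ^ 2 + 1) := by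
      simp [pow_succ, pow_mul]
    rw [this]
    exact dvd_sub h h2
end

section
/- Let k be a positive integer and let (z_n), (y_n) be defined by z_0 = 1, y_0 = 0, z_{n+1} = (16k²+1)z_n + 4k(16k²+2)y_n, y_{n+1} = (16k²+1)y_n + 4k·z_n. Then for every n ∈ ℕ, the integers (z_{2n+1} − 8k²)/(8k²+1) and z_{2n+1} + 8k² are relatively prime. -/
lemma zy_mod (k : ℤ) : ∀ n, (16 * k ^ 2 ∣ (zy k n).1 - 1) ∧ (4 * k ∣ (zy k n).2)
  | 0 => by simp [zy]
  | n + 1 => by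
    obtain ⟨⟨a, ha⟩, ⟨b, hb⟩⟩ := zy_mod k n
    constructor
    · exact ⟨(zy k n).1 + a + (16 * k ^ 2 + 2) * b, by
        simp only [zy]; linear_combination ha + 4 * k * (16 * k ^ 2 + 2) * hb⟩
    · exact ⟨(16 * k ^ 2 + 1) * b + (zy k n).1, by
        simp only [zy]; linear_combination (16 * k ^ 2 + 1) * hb⟩

lemma zy_mod' (k : ℤ) : ∀ n, (8 * k ^ 2 + 1) ∣ (zy k n).1 - (-1) ^ n
  | 0 => by simp [zy]
  | n + 1 => by
    obtain ⟨c, hc⟩ := zy_mod' k n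
    exact ⟨2 * (zy k n).1 + 8 * k * (zy k n).2 - c, by
      simp only [zy, pow_succ]; linear_combination -hc⟩

/-- For every `n`, the integers `(z (2n+1) - 8k^2) / (8k^2+1)` and `z (2n+1) + 8k^2`
are relatively prime. -/
theorem stmt_11 (k : ℤ) (hk : 0 < k) (n : ℕ) :
    IsCoprime (((zy k (2 * n + 1)).1 - 8 * k ^ 2) / (8 * k ^ 2 + 1))
      ((zy k (2 * n + 1)).1 + 8 * k ^ 2) := by
  set z := (zy k (2 * n + 1)).1 with hz
  obtain ⟨t, ht⟩ := (zy_mod k (2 * n + 1)).1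
  obtain ⟨s, hs'⟩ := zy_mod' k (2 * n + 1)
  have hneg : (-1 : ℤ) ^ (2 * n + 1) = -1 := by
    rw [pow_succ, pow_mul]; ring_nf
  rw [hneg] at hs'
  have hs : z + 1 = (8 * k ^ 2 + 1) * s := by linarith
  have hm : (8 * k ^ 2 + 1 : ℤ) ≠ 0 := by positivity
  have hA : (z - 8 * k ^ 2) / (8 * k ^ 2 + 1) = s - 1 := by
    have : z - 8 * k ^ 2 = (8 * k ^ 2 + 1) * (s - 1) := by linarith
    rw [this, Int.mul_ediv_cancel_left _ hm]
  rw [hA]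
  refine ⟨-(4 * k ^ 2 - (1 - 8 * k ^ 2) * t) * (8 * k ^ 2 + 1),
    (4 * k ^ 2 - (1 - 8 * k ^ 2) * t) + (1 - 8 * k ^ 2), ?_⟩
  have hzt : z = 16 * k ^ 2 * t + 1 := by linarith
  rw [hzt] at hs ⊢
  linear_combination (4 * k ^ 2 - (1 - 8 * k ^ 2) * t) * hs
end

section
/- Let k be a positive integer. If {8k², 8k²+1, c} is a D(-8k²)-triple of positive integers with c > 1, then there exist nonnegative integers s and t such that c = 2s² + 1 and t² − (16k²+2)s² = 1. -/
/-- If `{8k^2, 8k^2+1, c}` is a `D(-8k^2)`-triple of positive integers with `c > 1`, then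
there exist nonnegative integers `s` and `t` with `c = 2s^2 + 1` and
`t^2 - (16k^2+2)s^2 = 1`. -/
theorem stmt_14 (k c : ℤ) (hk : 0 < k) (hc : 1 < c)
    (hc1 : c ≠ 8 * k ^ 2) (hc2 : c ≠ 8 * k ^ 2 + 1)
    (h12 : ∃ x : ℤ, 8 * k ^ 2 * (8 * k ^ 2 + 1) - 8 * k ^ 2 = x ^ 2)
    (h1c : ∃ x : ℤ, 8 * k ^ 2 * c - 8 * k ^ 2 = x ^ 2)
    (h2c : ∃ x : ℤ, (8 * k ^ 2 + 1) * c - 8 * k ^ 2 = x ^ 2) :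
    ∃ s t : ℤ, 0 ≤ s ∧ 0 ≤ t ∧ c = 2 * s ^ 2 + 1 ∧
      t ^ 2 - (16 * k ^ 2 + 2) * s ^ 2 = 1 := by
  obtain ⟨x, hx⟩ := h1c
  obtain ⟨w, hw⟩ := h2c
  have hkx : k ∣ x := by
    have h2 : k ^ 2 ∣ x ^ 2 := ⟨8 * (c - 1), by linarith [hx]⟩
    exact (Int.pow_dvd_pow_iff (two_ne_zero)).mp h2
  obtain ⟨y, hy⟩ := hkx
  have hy2 : y ^ 2 = 8 * (c - 1) := by
    have hk0 : k ≠ 0 := hk.ne'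
    have h : k ^ 2 * y ^ 2 = k ^ 2 * (8 * (c - 1)) := by
      rw [← mul_pow, ← hy]; linarith
    exact mul_left_cancel₀ (pow_ne_zero 2 hk0) h
  have hd1 : (2 : ℤ) ∣ y ^ 2 := ⟨4 * (c - 1), by linarith⟩
  have h2y : (2 : ℤ) ∣ y := Int.Prime.dvd_pow' Nat.prime_two hd1
  obtain ⟨z, hz⟩ := h2y
  have hz2 : z ^ 2 = 2 * (c - 1) := by subst hz; ring_nf at hy2 ⊢; linarith
  have hd2 : (2 : ℤ) ∣ z ^ 2 := ⟨c - 1, by linarith⟩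
  have h2z : (2 : ℤ) ∣ z := Int.Prime.dvd_pow' Nat.prime_two hd2
  obtain ⟨s, hs⟩ := h2z
  have hcs : c = 2 * s ^ 2 + 1 := by subst hs; ring_nf at hz2 ⊢; linarith
  refine ⟨|s|, |w|, abs_nonneg s, abs_nonneg w, by rw [sq_abs]; exact hcs, ?_⟩
  rw [sq_abs, sq_abs]
  nlinarith [hw, hcs]
end

section
/- Let k be a positive integer. The integer 24k² + 1 is a perfect square if and only if k is a term of the sequence (k_i) defined by k_1 = 1, k_2 = 10, k_{n+2} = 10·k_{n+1} − k_n. -/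
/-- The sequence `k₁ = 1, k₂ = 10, k_(n+2) = 10 k_(n+1) - k_n`
(here indexed from 0, so `kseq 0 = k₁`). -/
def kseq : ℕ → ℤ
  | 0 => 1
  | 1 => 10
  | n + 2 => 10 * kseq (n + 1) - kseq n

/-- Companion sequence: the `x`-coordinates of the Pell solutions. -/
def mseq : ℕ → ℤ
  | 0 => 5
  | 1 => 49
  | n + 2 => 10 * mseq (n + 1) - mseq n

lemma step (n : ℕ) : kseq (n + 1) = 5 * kseq n + mseq n ∧
    mseq (n + 1) = 5 * mseq n + 24 * kseq n := by
  induction n with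
  | zero => constructor <;> rfl
  | succ n ih =>
    obtain ⟨h1, h2⟩ := ih
    constructor
    · show 10 * kseq (n + 1) - kseq n = _
      rw [h1, h2] at *
      ring
    · show 10 * mseq (n + 1) - mseq n = _
      rw [h1, h2] at *
      ring

lemma pell (n : ℕ) : (mseq n) ^ 2 = 24 * (kseq n) ^ 2 + 1 := by
  induction n with
  | zero => rfl
  | succ n ih =>
    obtain ⟨h1, h2⟩ := step n
    rw [h1, h2]
    nlinarith [ih]

lemma pos (n : ℕ) : 0 < kseq n ∧ 0 < mseq n := by
  induction n with
  | zero => exact ⟨one_pos, by norm_num [mseq]⟩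
  | succ n ih =>
    obtain ⟨h1, h2⟩ := step n
    constructor <;> [rw [h1]; rw [h2]] <;> nlinarith [ih.1, ih.2]

lemma main : ∀ n : ℕ, ∀ k x : ℤ, k.toNat = n → 0 < k → 0 < x →
    x ^ 2 = 24 * k ^ 2 + 1 → ∃ i, k = kseq i ∧ x = mseq i := by
  intro n
  induction n using Nat.strong_induction_on with
  | _ n ih =>
    intro k x hn hk hx hpell
    rcases eq_or_lt_of_le (show (1:ℤ) ≤ k from hk) with h1 | h2
    · -- k = 1
      have hk1 : k = 1 := h1.symm
      have hx2 : x ^ 2 = 25 := by rw [hk1] at hpell; linarith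
      have : (x - 5) * (x + 5) = 0 := by nlinarith
      rcases mul_eq_zero.mp this with h | h
      · exact ⟨0, by simp [kseq, mseq, hk1]; omega⟩
      · exfalso; linarith
    · -- k ≥ 2
      have hk2 : 2 ≤ k := h2
      set k' := 5 * k - x with hk'
      set x' := 5 * x - 24 * k with hx'
      have hk'pos : 0 < k' := by nlinarith
      have hx'pos : 0 < x' := by nlinarith
      have hk'lt : k' < k := by nlinarith
      have hpell' : x' ^ 2 = 24 * k' ^ 2 + 1 := by rw [hk', hx']; nlinarith
      have hlt : k'.toNat < n := by omega
      obtain ⟨i, hki, hxi⟩ := ih k'.toNat hlt k' x' rfl hk'pos hx'pos hpell'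
      obtain ⟨h1, h2⟩ := step i
      refine ⟨i + 1, ?_, ?_⟩
      · rw [h1, ← hki, ← hxi]; ring
      · rw [h2, ← hki, ← hxi]; ring

/-- For a positive integer `k`, the integer `24k^2 + 1` is a perfect square if and only if
`k` is a term of the sequence `k₁ = 1, k₂ = 10, k_(n+2) = 10 k_(n+1) - k_n`. -/
theorem stmt_16 (k : ℤ) (hk : 0 < k) :
    (∃ x : ℤ, 24 * k ^ 2 + 1 = x ^ 2) ↔ ∃ i : ℕ, k = kseq i := by
  constructor
  · rintro ⟨x, hx⟩
    have hxne : x ≠ 0 := by intro h; rw [h] at hx; nlinarith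
    have habs : (|x|) ^ 2 = 24 * k ^ 2 + 1 := by rw [sq_abs]; omega
    obtain ⟨i, hki, _⟩ := main k.toNat k (|x|) rfl hk (abs_pos.mpr hxne) habs
    exact ⟨i, hki⟩
  · rintro ⟨i, rfl⟩
    exact ⟨mseq i, (pell i).symm⟩
end

section
/- Let k be a positive integer. If there exists a positive integer d such that {1, 2k², 2k²+2k+1, d} is a D(-k²)-quadruple, then 3 is a square modulo 2k+1, i.e., there exists an integer u with u² ≡ 3 (mod 2k+1). -/
set_option maxHeartbeats 1000000 in
/-- Descent lemma: if `m ≥ 3` is odd and `u^2 = (m^2+1) v^2 + 2m` with `v ≥ 1`,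
then `m ∣ v^2 - 1`. -/
lemma descent_key (m : ℤ) (hm : 3 ≤ m) (hmo : Odd m) :
    ∀ V : ℕ, ∀ v u : ℤ, v.natAbs = V → 0 < v → 0 ≤ u →
      u ^ 2 = (m ^ 2 + 1) * v ^ 2 + 2 * m → m ∣ v ^ 2 - 1 := by
  intro V
  induction V using Nat.strong_induction_on with
  | _ V ih =>
    intro v u hV hv hu heq
    -- u > m * v
    have hmv : m * v < u := by nlinarith [sq_nonneg (u - m * v), sq_nonneg v]
    have hmv1 : m * v + 1 ≤ u := hmv
    rcases eq_or_lt_of_le hmv1 with hcase | hcase'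
    · -- u = m*v + 1 : then (v-1)(v-(2m-1)) = 0
      have h0 : (v - 1) * (v - (2 * m - 1)) = 0 := by nlinarith [hcase.symm]
      rcases mul_eq_zero.mp h0 with h1 | h1
      · have : v = 1 := by linarith
        simp [this]
      · have : v = 2 * m - 1 := by linarith
        refine ⟨4 * m - 4, ?_⟩
        rw [this]; ring
    · -- u ≥ m*v + 2 : descent
      have hu2 : m * v + 2 ≤ u := by linarith
      -- v ≥ 2m
      have hkey0 : 4 * m * v + 4 ≤ v ^ 2 + 2 * m := by
        nlinarith [mul_nonneg (sub_nonneg.2 hu2) (by positivity : (0:ℤ) ≤ u + m * v + 2)]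
      have hvbig : 2 * m ≤ v := by
        by_contra hcon
        push_neg at hcon
        have h1 : (0:ℤ) ≤ (2 * m - 1 - v) * v :=
          mul_nonneg (by linarith) (le_of_lt hv)
        nlinarith [h1, hv, hm]
      obtain ⟨v', hv'⟩ : ∃ v', v' = (2 * m ^ 2 + 1) * v - 2 * m * u := ⟨_, rfl⟩
      obtain ⟨u', hu'⟩ : ∃ u', u' = (2 * m ^ 2 + 1) * u - 2 * m * (m ^ 2 + 1) * v := ⟨_, rfl⟩
      have heq' : u' ^ 2 = (m ^ 2 + 1) * v' ^ 2 + 2 * m := by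
        rw [hv', hu']; linear_combination heq
      -- v' < v
      have hlt : v' < v := by
        rw [hv']; nlinarith [hmv]
      -- -v < v'  (since (m^2+1) v > m u, using (m^2+1) v^2 > 2 m^3)
      have hgt : -v < v' := by
        have hv2 : 4 * m ^ 2 ≤ v ^ 2 := by
          nlinarith [mul_nonneg (sub_nonneg.2 hvbig) (by linarith : (0:ℤ) ≤ v + 2 * m)]
        have hbig : 2 * m ^ 3 < (m ^ 2 + 1) * v ^ 2 := by
          nlinarith [mul_nonneg (by positivity : (0:ℤ) ≤ m ^ 2 + 1) (sub_nonneg.2 hv2), hm]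
        have e2 : m ^ 2 * u ^ 2 = m ^ 2 * ((m ^ 2 + 1) * v ^ 2) + 2 * m ^ 3 := by
          linear_combination m ^ 2 * heq
        have hsq : (m * u) ^ 2 < ((m ^ 2 + 1) * v) ^ 2 := by nlinarith [e2, hbig]
        have h1 : m * u < (m ^ 2 + 1) * v :=
          lt_of_pow_lt_pow_left₀ 2 (by positivity) hsq
        rw [hv']; linarith
      -- v' ≠ 0
      have hne : v' ≠ 0 := by
        intro h0
        rw [h0] at heq'
        obtain ⟨j, hj⟩ := hmo
        rcases Int.even_or_odd u' with ⟨a, ha⟩ | ⟨a, ha⟩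
        · rw [ha] at heq'
          have h4 : 4 * (a * a) = 2 * m := by linear_combination heq'
          omega
        · rw [ha] at heq'
          have h4 : 4 * (a * a) + 4 * a + 1 = 2 * m := by linear_combination heq'
          omega
      have habs : |v'| < v := abs_lt.mpr ⟨by linarith, hlt⟩
      have hVlt : (|v'|).natAbs < V := by
        rw [← hV]
        have : |v'| ≥ 0 := abs_nonneg _
        omega
      have hIH := ih (|v'|).natAbs hVlt |v'| |u'| rfl
        (abs_pos.mpr hne) (abs_nonneg _) (by rw [sq_abs, sq_abs]; exact heq')
      rw [sq_abs] at hIH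
      -- v ≡ v' mod m
      have hmod : m ∣ v - v' := ⟨2 * u - 2 * m * v, by rw [hv']; ring⟩
      have : v ^ 2 - 1 = (v' ^ 2 - 1) + (v - v') * (v + v') := by ring
      rw [this]
      exact dvd_add hIH (Dvd.dvd.mul_right hmod _)

/-- If there exists a positive integer `d` such that `{1, 2k^2, 2k^2+2k+1, d}` is a
`D(-k^2)`-quadruple, then `3` is a square modulo `2k+1`. -/
theorem stmt_18 (k : ℤ) (hk : 0 < k)
    (h : ∃ d : ℤ, 0 < d ∧
      d ≠ 1 ∧ d ≠ 2 * k ^ 2 ∧ d ≠ 2 * k ^ 2 + 2 * k + 1 ∧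
      (∃ x : ℤ, 1 * (2 * k ^ 2) - k ^ 2 = x ^ 2) ∧
      (∃ x : ℤ, 1 * (2 * k ^ 2 + 2 * k + 1) - k ^ 2 = x ^ 2) ∧
      (∃ x : ℤ, 2 * k ^ 2 * (2 * k ^ 2 + 2 * k + 1) - k ^ 2 = x ^ 2) ∧
      (∃ x : ℤ, 1 * d - k ^ 2 = x ^ 2) ∧
      (∃ x : ℤ, 2 * k ^ 2 * d - k ^ 2 = x ^ 2) ∧
      (∃ x : ℤ, (2 * k ^ 2 + 2 * k + 1) * d - k ^ 2 = x ^ 2)) :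
    ∃ u : ℤ, u ^ 2 ≡ 3 [ZMOD (2 * k + 1)] := by
  obtain ⟨d, hd, -, -, -, -, -, -, ⟨x, hx⟩, ⟨y, hy⟩, ⟨z, hz⟩⟩ := h
  set m : ℤ := 2 * k + 1 with hm
  have hm3 : 3 ≤ m := by omega
  have hmo : Odd m := ⟨k, by ring⟩
  -- d = x^2 + k^2
  have hdval : d = x ^ 2 + k ^ 2 := by linarith [hx]
  -- k ∣ y, w = y / k with w^2 = 2d - 1
  have hk2 : k ^ 2 ∣ y ^ 2 := ⟨2 * d - 1, by linarith [hy]⟩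
  obtain ⟨w, hw⟩ := (Int.pow_dvd_pow_iff two_ne_zero).mp hk2
  have hw2 : w ^ 2 = 2 * d - 1 := by
    have hkne : k ^ 2 ≠ 0 := pow_ne_zero _ (by omega)
    have : k ^ 2 * w ^ 2 = k ^ 2 * (2 * d - 1) := by
      have : (k * w) ^ 2 = 2 * k ^ 2 * d - k ^ 2 := by rw [← hw]; exact hy.symm
      nlinarith [this]
    exact mul_left_cancel₀ hkne this
  have hwne : w ≠ 0 := by
    intro h0; rw [h0] at hw2; simp at hw2; omega
  -- Pell equation: (2z)^2 = (m^2+1) w^2 + 2m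
  have hpell : (2 * |z|) ^ 2 = (m ^ 2 + 1) * |w| ^ 2 + 2 * m := by
    rw [mul_pow, sq_abs, sq_abs, hm]
    nlinarith [hz, hw2]
  have hkey := descent_key m hm3 hmo (|w|).natAbs |w| (2 * |z|) rfl
    (abs_pos.mpr hwne) (by positivity) hpell
  rw [sq_abs] at hkey
  -- m ∣ w^2 - 1 = 2(d-1), m odd so m ∣ d - 1
  have h2d : m ∣ 2 * (d - 1) := by
    have : 2 * (d - 1) = w ^ 2 - 1 := by linarith [hw2]
    rw [this]; exact hkey
  obtain ⟨c, hc⟩ := h2d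
  have hceven : Even c := by
    rcases Int.even_or_odd c with hc' | hodd
    · exact hc'
    · exfalso
      have ho : Odd (m * c) := hmo.mul hodd
      rw [← hc] at ho
      exact (Int.not_odd_iff_even.mpr ⟨d - 1, by ring⟩) ho
  obtain ⟨a, ha⟩ := hceven
  have hdvd : m ∣ d - 1 := by
    have h2 : 2 * (d - 1) = 2 * (m * a) := by rw [hc, ha]; ring
    exact ⟨a, by linarith⟩
  -- conclude: (2x)^2 ≡ 3 mod m
  refine ⟨2 * x, (Int.modEq_iff_dvd.mpr ?_).symm⟩
  have : (2 * x) ^ 2 - 3 = 4 * (d - 1) - m * (m - 2) := by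
    rw [hm]; nlinarith [hx]
  rw [this]
  exact dvd_sub (Dvd.dvd.mul_left hdvd 4) (Dvd.dvd.mul_right dvd_rfl _)
end

section
/- Let k be a positive integer with k ≡ 2 (mod 6) or k ≡ 3 (mod 6). Then there is no positive integer d such that {1, 2k², 2k²+2k+1, d} is a D(-k²)-quadruple. -/
/-- A square is never twice an odd number. -/
lemma aux_sq_ne_two_mul_odd (m w : ℤ) (hodd : m % 2 = 1) : w ^ 2 ≠ 2 * m := by
  intro h
  rcases Int.even_or_odd w with ⟨a, ha⟩ | ⟨a, ha⟩ <;> subst ha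
  · have h2 : m = 2 * a ^ 2 := by nlinarith
    omega
  · have h2 : 4 * a ^ 2 + 4 * a + 1 = 2 * m := by nlinarith
    omega

/-- Transfer lemma: if `a ≡ ±b (mod m)` and `a ≡ ±1 (mod m)` then `b ≡ ±1 (mod m)`. -/
lemma aux_transfer (m a b : ℤ) (h1 : m ∣ a - b ∨ m ∣ a + b)
    (h2 : m ∣ a - 1 ∨ m ∣ a + 1) : m ∣ b - 1 ∨ m ∣ b + 1 := by
  rcases h1 with h1 | h1 <;> rcases h2 with h2 | h2
  · refine Or.inl ?_
    have h := dvd_sub h2 h1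
    rwa [show a - 1 - (a - b) = b - 1 by ring] at h
  · refine Or.inr ?_
    have h := dvd_sub h2 h1
    rwa [show a + 1 - (a - b) = b + 1 by ring] at h
  · refine Or.inr ?_
    have h := dvd_sub h1 h2
    rwa [show a + b - (a - 1) = b + 1 by ring] at h
  · refine Or.inl ?_
    have h := dvd_sub h1 h2
    rwa [show a + b - (a + 1) = b - 1 by ring] at h

/-- Key descent lemma: every nonnegative solution of `w² - (m²+1)s² = ±2m` (with `m ≥ 3` odd)
satisfies `s ≡ ±1` and `w ≡ ±1 (mod m)`. -/
lemma aux_key (m : ℤ) (hm : 3 ≤ m) (hodd : m % 2 = 1) (n : ℕ) :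
    ∀ w e : ℤ, (e = 1 ∨ e = -1) → 0 ≤ w →
      w ^ 2 - (m ^ 2 + 1) * (n : ℤ) ^ 2 = e * (2 * m) →
      (m ∣ (n : ℤ) - 1 ∨ m ∣ (n : ℤ) + 1) ∧ (m ∣ w - 1 ∨ m ∣ w + 1) := by
  induction n using Nat.strong_induction_on with
  | _ n ih =>
    intro w e he hw heq
    rcases Nat.lt_or_ge n 2 with hn | hn
    · -- base cases n = 0, 1
      interval_cases n
      · -- n = 0 : w² = ±2m impossible
        exfalso
        norm_num at heq
        rcases he with rfl | rfl
        · exact aux_sq_ne_two_mul_odd m w hodd (by linarith)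
        · nlinarith
      · -- n = 1 : w = m + e
        norm_num at heq
        have hwe : w = m + e := by
          have h2 : (w - (m + e)) * (w + (m + e)) = 0 := by
            rcases he with rfl | rfl <;> nlinarith
          rcases mul_eq_zero.mp h2 with h | h
          · linarith
          · exfalso; rcases he with rfl | rfl <;> omega
        subst hwe
        push_cast
        refine ⟨Or.inl ⟨0, by ring⟩, ?_⟩
        rcases he with rfl | rfl
        · exact Or.inl ⟨1, by ring⟩
        · exact Or.inr ⟨1, by ring⟩
    · -- descent step, s ≥ 2
      set s : ℤ := (n : ℤ) with hsdef
      have hs0 : 0 ≤ s := Int.natCast_nonneg n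
      have hs2 : (2 : ℤ) ≤ s := by rw [hsdef]; exact_mod_cast hn
      have hme : e * (2 * m) ≤ 2 * m ∧ -(2 * m) ≤ e * (2 * m) := by
        rcases he with rfl | rfl <;> constructor <;> nlinarith
      -- bounds: m*s - s < w < m*s + s
      have hub : w < m * s + s := by
        by_contra hcon
        push_neg at hcon
        have h2 : (m * s + s) * (m * s + s) ≤ w * w :=
          mul_le_mul hcon hcon (by positivity) hw
        nlinarith [hme.1, mul_pos (by linarith : (0:ℤ) < m)
          (by nlinarith : (0:ℤ) < s * s - 1)]
      have hlb : m * s - s < w := by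
        by_contra hcon
        push_neg at hcon
        have h0 : (0:ℤ) ≤ m * s - s := le_trans hw hcon
        have h2 : w * w ≤ (m * s - s) * (m * s - s) := mul_le_mul hcon hcon hw h0
        nlinarith [hme.2, mul_pos (by linarith : (0:ℤ) < 2 * m)
          (by nlinarith : (0:ℤ) < s * s - 1)]
      set s₁ : ℤ := |w - m * s| with hs₁
      set w₁ : ℤ := |(m ^ 2 + 1) * s - m * w| with hw₁
      have hs₁lt : s₁ < s := abs_lt.mpr ⟨by linarith, by linarith⟩
      have hs₁0 : 0 ≤ s₁ := abs_nonneg _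
      have heq' : w₁ ^ 2 - (m ^ 2 + 1) * s₁ ^ 2 = (-e) * (2 * m) := by
        rw [hw₁, hs₁, sq_abs, sq_abs]; linear_combination -heq
      have hcast : ((s₁.toNat : ℤ)) = s₁ := Int.toNat_of_nonneg hs₁0
      have hltn : s₁.toNat < n := by omega
      have hres := ih s₁.toNat hltn w₁ (-e)
        (by rcases he with rfl | rfl
            · exact Or.inr (by norm_num)
            · exact Or.inl (by norm_num))
        (abs_nonneg _) (by rw [hcast]; exact heq')
      rw [hcast] at hres
      constructor
      · -- s ≡ ±1 : from w₁ ≡ ±s (mod m)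
        refine aux_transfer m w₁ s ?_ hres.2
        rcases abs_choice ((m ^ 2 + 1) * s - m * w) with h | h
        · exact Or.inl ⟨m * s - w, by rw [hw₁, h]; ring⟩
        · exact Or.inr ⟨w - m * s, by rw [hw₁, h]; ring⟩
      · -- w ≡ ±1 : from s₁ ≡ ±w (mod m)
        refine aux_transfer m s₁ w ?_ hres.1
        rcases abs_choice (w - m * s) with h | h
        · exact Or.inl ⟨-s, by rw [hs₁, h]; ring⟩
        · exact Or.inr ⟨s, by rw [hs₁, h]; ring⟩

/-- If `k ≡ 2 (mod 6)` or `k ≡ 3 (mod 6)`, then there is no positive integer `d` such that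
`{1, 2k^2, 2k^2+2k+1, d}` is a `D(-k^2)`-quadruple. -/
theorem stmt_19 (k : ℤ) (hk : 0 < k) (hmod : k % 6 = 2 ∨ k % 6 = 3) :
    ¬ ∃ d : ℤ, 0 < d ∧
      d ≠ 1 ∧ d ≠ 2 * k ^ 2 ∧ d ≠ 2 * k ^ 2 + 2 * k + 1 ∧
      (∃ x : ℤ, 1 * (2 * k ^ 2) - k ^ 2 = x ^ 2) ∧
      (∃ x : ℤ, 1 * (2 * k ^ 2 + 2 * k + 1) - k ^ 2 = x ^ 2) ∧
      (∃ x : ℤ, 2 * k ^ 2 * (2 * k ^ 2 + 2 * k + 1) - k ^ 2 = x ^ 2) ∧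
      (∃ x : ℤ, 1 * d - k ^ 2 = x ^ 2) ∧
      (∃ x : ℤ, 2 * k ^ 2 * d - k ^ 2 = x ^ 2) ∧
      (∃ x : ℤ, (2 * k ^ 2 + 2 * k + 1) * d - k ^ 2 = x ^ 2) := by
  rintro ⟨d, hd, -, -, -, -, -, -, ⟨x, hx⟩, ⟨y, hy⟩, ⟨z, hz⟩⟩
  have hk0 : k ≠ 0 := hk.ne'
  -- Extract s with s² = 2d - 1
  have hky : k ∣ y := by
    refine (Int.pow_dvd_pow_iff two_ne_zero).mp ⟨2 * d - 1, ?_⟩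
    linarith
  obtain ⟨s, rfl⟩ := hky
  have hs : s ^ 2 = 2 * d - 1 := by
    have h2 : k ^ 2 * s ^ 2 = k ^ 2 * (2 * d - 1) := by linear_combination -hy
    exact mul_left_cancel₀ (pow_ne_zero 2 hk0) h2
  set m : ℤ := 2 * k + 1 with hmdef
  have hm3 : 3 ≤ m := by omega
  have hmodd : m % 2 = 1 := by omega
  -- Pell-type equation (2|z|)² - (m²+1)|s|² = 2m
  have hcast : ((s.natAbs : ℤ)) = |s| := (Int.abs_eq_natAbs s).symm
  have hpell : (2 * |z|) ^ 2 - (m ^ 2 + 1) * ((s.natAbs : ℤ)) ^ 2 = 1 * (2 * m) := by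
    rw [hcast, sq_abs]
    have h1 : (2 * |z|) ^ 2 = 4 * z ^ 2 := by rw [mul_pow, sq_abs]; norm_num
    rw [h1, hmdef]
    linear_combination -4 * hz - (4 * k ^ 2 + 4 * k + 2) * hs
  have hres := aux_key m hm3 hmodd s.natAbs (2 * |z|) 1 (Or.inl rfl)
    (by positivity) hpell
  rw [hcast] at hres
  -- m ∣ s² - 1
  have hs1 : m ∣ s ^ 2 - 1 := by
    have hfac : s ^ 2 - 1 = (|s| - 1) * (|s| + 1) := by rw [← sq_abs s]; ring
    rw [hfac]
    rcases hres.1 with h | h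
    · exact Dvd.dvd.mul_right h _
    · exact Dvd.dvd.mul_left h _
  -- hence m ∣ (2x)² - 3
  obtain ⟨t, ht⟩ := hs1
  have hdvd3 : m ∣ (2 * x) ^ 2 - 3 := by
    refine ⟨2 * t - m + 2, ?_⟩
    rw [hmdef] at ht ⊢
    linear_combination -4 * hx - 2 * hs + 2 * ht
  -- so 3 is a square modulo m
  set M : ℕ := m.toNat with hMdef
  have hMcast : ((M : ℤ)) = m := Int.toNat_of_nonneg (by omega)
  have hsq : IsSquare ((3 : ℤ) : ZMod M) := by
    refine ⟨((2 * x : ℤ) : ZMod M), ?_⟩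
    have h0 : ((((2 * x) ^ 2 - 3 : ℤ)) : ZMod M) = 0 := by
      rw [ZMod.intCast_zmod_eq_zero_iff_dvd, hMcast]
      exact hdvd3
    push_cast at h0 ⊢
    linear_combination -h0
  -- but the Jacobi symbol (3 | m) is -1
  have hModd : Odd M := by
    rw [Nat.odd_iff]; omega
  have hM12 : M % 12 = 5 ∨ M % 12 = 7 := by omega
  have hjac : jacobiSym 3 M = -1 := by
    rw [jacobiSym.mod_right 3 hModd]
    have h12 : 4 * (3 : ℤ).natAbs = 12 := rfl
    rw [h12]
    rcases hM12 with h | h <;> rw [h]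
    · have h5 : ¬ IsSquare ((3 : ℤ) : ZMod 5) := by decide
      haveI : Fact (Nat.Prime 5) := ⟨by norm_num⟩
      exact ZMod.nonsquare_iff_jacobiSym_eq_neg_one.mpr h5
    · have h7 : ¬ IsSquare ((3 : ℤ) : ZMod 7) := by decide
      haveI : Fact (Nat.Prime 7) := ⟨by norm_num⟩
      exact ZMod.nonsquare_iff_jacobiSym_eq_neg_one.mpr h7
  exact ZMod.nonsquare_of_jacobiSym_eq_neg_one hjac hsq
end
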